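/- (Lemma 7.1) Fix N ≥ 1 and let λ ∈ SGN(N) be a signature. Let L(λ) ⊂ 𝔛^{(N)} be the associated N-point configuration, and let X(λ) = (L(λ) ∖ 𝔛^{(N)}_in) ∪ (𝔛^{(N)}_in ∖ L(λ)) be the associated configuration of particles and holes. Let a±_i = a_i(λ±) and b±_i = b_i(λ±) denote the modified Frobenius coordinates of the Young diagrams λ⁺ and λ⁻. Then X(λ) ∩ 𝔛^{(N)}_out = {a⁺_i + N/2 : 1 ≤ i ≤ d(λ⁺)} ∪ {−a⁻_j − N/2 : 1 ≤ j ≤ d(λ⁻)} and X(λ) ∩ 𝔛^{(N)}_in = {N/2 − b⁺_i : 1 ≤ i ≤ d(λ⁺)} ∪ {−N/2 + b⁻_j : 1 ≤ j ≤ d(λ⁻)}. -/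

import Mathlib

/-- A signature of length `N`: a nonincreasing `N`-tuple of integers. -/
def Signature (N : ℕ) : Type := {l : Fin N → ℤ // Antitone l}

/-- The number of diagonal boxes `d(μ)` of a Young diagram `μ`. -/
def diagLen (μ : YoungDiagram) : ℕ := (μ.cells.filter fun c => c.1 = c.2).card

/-- Modified Frobenius coordinate `a_i(μ) = μ_i - i + 1/2` (0-indexed: `k = i - 1`). -/
def aFrob (μ : YoungDiagram) (k : ℕ) : ℚ := (μ.rowLen k : ℚ) - k - 1/2

/-- Modified Frobenius coordinate `b_i(μ) = μ'_i - i + 1/2` (0-indexed: `k = i - 1`). -/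
def bFrob (μ : YoungDiagram) (k : ℕ) : ℚ := (μ.colLen k : ℚ) - k - 1/2

/-- The Young diagram `λ⁺` whose `i`-th row is `max(λ_i, 0)`. -/
def sigPosYD {N : ℕ} (l : Signature N) : YoungDiagram :=
  YoungDiagram.ofRowLens (List.ofFn fun i => (l.1 i).toNat)
    (List.sortedGE_ofFn_iff.mpr fun _ _ h => Int.toNat_le_toNat (l.2 h))

/-- The Young diagram `λ⁻` whose `j`-th row is `max(-λ_{N+1-j}, 0)`. -/
def sigNegYD {N : ℕ} (l : Signature N) : YoungDiagram :=
  YoungDiagram.ofRowLens (List.ofFn fun i => (-(l.1 i.rev)).toNat)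
    (List.sortedGE_ofFn_iff.mpr fun _ _ h =>
      Int.toNat_le_toNat (neg_le_neg (l.2 (Fin.rev_le_rev.mpr h))))

/-- The lattice `𝔛^{(N)} = ℤ + (N+1)/2 ⊂ ℚ`. -/
def latticeSet (N : ℕ) : Set ℚ := {x | ∃ m : ℤ, x = (m : ℚ) + (N + 1) / 2}

/-- The inner part `𝔛^{(N)}_in = 𝔛^{(N)} ∩ (-N/2, N/2) = {-(N-1)/2, …, (N-1)/2}`
(exactly `N` points). -/
def innerFin (N : ℕ) : Finset ℚ :=
  Finset.univ.image fun k : Fin N => (k : ℚ) - (N - 1) / 2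

/-- The outer part `𝔛^{(N)}_out = 𝔛^{(N)} ∖ 𝔛^{(N)}_in`. -/
def outerSet (N : ℕ) : Set ℚ := latticeSet N \ ↑(innerFin N)

/-- The `N`-point configuration `L(λ) = {λ_i - i + (N+1)/2 : 1 ≤ i ≤ N} ⊂ 𝔛^{(N)}`. -/
def config (N : ℕ) (l : Signature N) : Finset ℚ :=
  Finset.univ.image fun i : Fin N => (l.1 i : ℚ) - ((i : ℕ) + 1) + (N + 1) / 2

/-- The particles/holes configuration
`X(λ) = (L(λ) ∖ 𝔛^{(N)}_in) ∪ (𝔛^{(N)}_in ∖ L(λ))`. -/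
def Xconf (N : ℕ) (l : Signature N) : Finset ℚ :=
  (config N l \ innerFin N) ∪ (innerFin N \ config N l)

lemma nat_eq_of_lt_iff {a b : ℕ} (h : ∀ j, j < a ↔ j < b) : a = b := by
  have h1 := h a; have h2 := h b; omega

lemma rowLen_ofRowLens' (w : List ℕ) (hw : w.SortedGE) (i : ℕ) :
    (YoungDiagram.ofRowLens w hw).rowLen i = if h : i < w.length then w[i] else 0 := by
  apply nat_eq_of_lt_iff
  intro j
  rw [← YoungDiagram.mem_iff_lt_rowLen, YoungDiagram.mem_ofRowLens]
  split
  · next h => simp [h]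
  · next h => simp [h]

section Sig

variable {N : ℕ} (l : Signature N)

lemma rowLen_sigPos (i : ℕ) :
    (sigPosYD l).rowLen i = if h : i < N then (l.1 ⟨i, h⟩).toNat else 0 := by
  rw [sigPosYD, rowLen_ofRowLens']
  by_cases h : i < N
  · rw [dif_pos (by simpa using h), dif_pos h]
    simp [List.getElem_ofFn]
  · rw [dif_neg (by simpa using h), dif_neg h]

lemma rowLen_sigNeg (i : ℕ) :
    (sigNegYD l).rowLen i = if h : i < N then (-(l.1 (Fin.rev ⟨i, h⟩))).toNat else 0 := by
  rw [sigNegYD, rowLen_ofRowLens']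
  by_cases h : i < N
  · rw [dif_pos (by simpa using h), dif_pos h]
    simp [List.getElem_ofFn]
  · rw [dif_neg (by simpa using h), dif_neg h]

lemma colLen_sigPos_le (j : ℕ) : (sigPosYD l).colLen j ≤ N := by
  by_contra hc
  push_neg at hc
  have hmem : (N, j) ∈ sigPosYD l := YoungDiagram.mem_iff_lt_colLen.mpr hc
  have := YoungDiagram.mem_iff_lt_rowLen.mp hmem
  rw [rowLen_sigPos, dif_neg (lt_irrefl N)] at this
  omega

lemma colLen_sigNeg_le (j : ℕ) : (sigNegYD l).colLen j ≤ N := by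
  by_contra hc
  push_neg at hc
  have hmem : (N, j) ∈ sigNegYD l := YoungDiagram.mem_iff_lt_colLen.mpr hc
  have := YoungDiagram.mem_iff_lt_rowLen.mp hmem
  rw [rowLen_sigNeg, dif_neg (lt_irrefl N)] at this
  omega

lemma downset_mem_iff (s : Finset ℕ) (h : ∀ i ∈ s, ∀ j ≤ i, j ∈ s) (k : ℕ) :
    k ∈ s ↔ k < s.card := by
  constructor
  · intro hk
    have hsub : Finset.range (k + 1) ⊆ s := fun j hj => h k hk j (by
      simpa using Nat.lt_succ_iff.mp (Finset.mem_range.mp hj))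
    have := Finset.card_le_card hsub
    simp at this; omega
  · intro hk
    by_contra hks
    have hsub : s ⊆ Finset.range k := fun m hm => by
      rw [Finset.mem_range]
      by_contra hmk
      exact hks (h m hm k (by omega))
    have := Finset.card_le_card hsub
    simp at this; omega

lemma lt_diagLen_iff (μ : YoungDiagram) (k : ℕ) :
    k < (μ.cells.filter fun c => c.1 = c.2).card ↔ (k, k) ∈ μ := by
  have hcard : (μ.cells.filter fun c => c.1 = c.2).card
      = ((Finset.range (μ.colLen 0)).filter fun i => (i, i) ∈ μ).card := by
    apply Finset.card_bij (fun c _ => c.1)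
    · rintro ⟨a, b⟩ hc
      simp only [Finset.mem_filter, YoungDiagram.mem_cells] at hc ⊢
      obtain ⟨hmem, heq⟩ := hc
      subst heq
      refine ⟨Finset.mem_range.mpr ?_, hmem⟩
      rw [← YoungDiagram.mem_iff_lt_colLen]
      exact μ.isLowerSet (by simp : (a, 0) ≤ (a, a)) hmem
    · rintro ⟨a, b⟩ ha ⟨c, d⟩ hc hac
      simp only [Finset.mem_filter] at ha hc
      simp_all
    · intro i hi
      simp only [Finset.mem_filter, Finset.mem_range] at hi
      exact ⟨(i, i), by simp [hi.2], rfl⟩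
  rw [hcard, ← downset_mem_iff]
  · simp only [Finset.mem_filter, Finset.mem_range]
    constructor
    · exact fun h => h.2
    · intro h
      refine ⟨?_, h⟩
      rw [← YoungDiagram.mem_iff_lt_colLen]
      exact μ.isLowerSet (by simp : (k, 0) ≤ (k, k)) h
  · intro i hi j hj
    simp only [Finset.mem_filter, Finset.mem_range] at hi ⊢
    exact ⟨by omega, μ.isLowerSet (by simp [hj] : ((j, j) : ℕ × ℕ) ≤ (i, i)) hi.2⟩

lemma frob_disj (μ : YoungDiagram) (i j : ℕ) :
    ((μ.rowLen i : ℤ) - i - 1) ≠ (j : ℤ) - μ.colLen j := by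
  by_cases h : (i, j) ∈ μ
  · have h1 : j < μ.rowLen i := YoungDiagram.mem_iff_lt_rowLen.mp h
    have h2 : i < μ.colLen j := YoungDiagram.mem_iff_lt_colLen.mp h
    omega
  · have h1 : μ.rowLen i ≤ j := by
      by_contra hc; exact h (YoungDiagram.mem_iff_lt_rowLen.mpr (by omega))
    have h2 : μ.colLen j ≤ i := by
      by_contra hc; exact h (YoungDiagram.mem_iff_lt_colLen.mpr (by omega))
    omega

lemma frob_cover (μ : YoungDiagram) (t : ℤ) :
    (∃ i : ℕ, t = (μ.rowLen i : ℤ) - i - 1) ∨ (∃ j : ℕ, t = (j : ℤ) - μ.colLen j) := by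
  have hex : ∃ s : ℕ, (μ.rowLen s : ℤ) - s - 1 ≤ t := by
    refine ⟨μ.rowLen 0 + t.natAbs, ?_⟩
    have := μ.rowLen_anti 0 (μ.rowLen 0 + t.natAbs) (by omega)
    have h2 : -(t.natAbs : ℤ) ≤ t := by rcases Int.natAbs_eq t with h|h <;> omega
    omega
  by_cases he : (μ.rowLen (Nat.find hex) : ℤ) - (Nat.find hex) - 1 = t
  · exact Or.inl ⟨Nat.find hex, he.symm⟩
  · set i0 := Nat.find hex with hi0
    have h1 : (μ.rowLen i0 : ℤ) - i0 - 1 ≤ t := Nat.find_spec hex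
    have h1' : (μ.rowLen i0 : ℤ) - i0 ≤ t := by omega
    have hj0 : (0 : ℤ) ≤ t + i0 := by
      have : (0 : ℤ) ≤ (μ.rowLen i0 : ℤ) := by positivity
      omega
    refine Or.inr ⟨(t + i0).toNat, ?_⟩
    have hjz : ((t + i0).toNat : ℤ) = t + i0 := Int.toNat_of_nonneg hj0
    have hle : μ.colLen (t + i0).toNat ≤ i0 := by
      by_contra hc
      have hmem : (i0, (t + i0).toNat) ∈ μ :=
        YoungDiagram.mem_iff_lt_colLen.mpr (by omega)
      have := YoungDiagram.mem_iff_lt_rowLen.mp hmem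
      omega
    have hge : i0 ≤ μ.colLen (t + i0).toNat := by
      rcases Nat.eq_zero_or_pos i0 with h | h
      · omega
      · have hmin := Nat.find_min hex (m := i0 - 1) (by omega)
        push_neg at hmin
        have hmem : (i0 - 1, (t + i0).toNat) ∈ μ := by
          apply YoungDiagram.mem_iff_lt_rowLen.mpr
          have : (i0 - 1 : ℤ) = ((i0 : ℤ) - 1) := by omega
          omega
        have := YoungDiagram.mem_iff_lt_colLen.mp hmem
        omega
    omega

lemma diag_iff (μ : YoungDiagram) (k : ℕ) : k < diagLen μ ↔ (k, k) ∈ μ :=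
  lt_diagLen_iff μ k

section Sig2

variable {N : ℕ} (l : Signature N)

lemma rowLen_sigPos' (i : Fin N) : (sigPosYD l).rowLen i = (l.1 i).toNat := by
  rw [rowLen_sigPos, dif_pos i.isLt]

lemma rowLen_sigNeg' (k : ℕ) (hk : k < N) (i : Fin N) (hik : (i : ℕ) = N - 1 - k) :
    (sigNegYD l).rowLen k = (-(l.1 i)).toNat := by
  rw [rowLen_sigNeg, dif_pos hk]
  have hfin : (Fin.rev ⟨k, hk⟩ : Fin N) = i := by
    ext
    simp only [Fin.val_rev]
    omega
  rw [hfin]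

lemma lt_N_of_diagPos {k : ℕ} (hk : k < diagLen (sigPosYD l)) : k < N := by
  have := YoungDiagram.mem_iff_lt_rowLen.mp ((diag_iff _ _).mp hk)
  rw [rowLen_sigPos] at this
  by_contra hc
  rw [dif_neg hc] at this
  omega

lemma lt_N_of_diagNeg {k : ℕ} (hk : k < diagLen (sigNegYD l)) : k < N := by
  have := YoungDiagram.mem_iff_lt_rowLen.mp ((diag_iff _ _).mp hk)
  rw [rowLen_sigNeg] at this
  by_contra hc
  rw [dif_neg hc] at this
  omega

lemma outer_int (t : ℤ) :
    ((∃ i : Fin N, t = l.1 i - ((i : ℕ) + 1)) ∧ (0 ≤ t ∨ t ≤ -(N : ℤ) - 1)) ↔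
    ((∃ k, k < diagLen (sigPosYD l) ∧ t = ((sigPosYD l).rowLen k : ℤ) - k - 1) ∨
     (∃ k, k < diagLen (sigNegYD l) ∧ t = (k : ℤ) - N - (sigNegYD l).rowLen k)) := by
  constructor
  · rintro ⟨⟨i, rfl⟩, hrange⟩
    have hiN : (i : ℕ) < N := i.isLt
    rcases hrange with hpos | hneg
    · left
      refine ⟨i, ?_, ?_⟩
      · rw [diag_iff, YoungDiagram.mem_iff_lt_rowLen, rowLen_sigPos']
        omega
      · rw [rowLen_sigPos']
        omega
    · right
      refine ⟨N - 1 - i, ?_, ?_⟩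
      · rw [diag_iff, YoungDiagram.mem_iff_lt_rowLen,
          rowLen_sigNeg' l (N - 1 - i) (by omega) i (by omega)]
        omega
      · rw [rowLen_sigNeg' l (N - 1 - i) (by omega) i (by omega)]
        omega
  · rintro (⟨k, hk, rfl⟩ | ⟨k, hk, rfl⟩)
    · have hkN := lt_N_of_diagPos l hk
      have hmem := YoungDiagram.mem_iff_lt_rowLen.mp ((diag_iff _ _).mp hk)
      rw [rowLen_sigPos l, dif_pos hkN] at hmem ⊢
      constructor
      · exact ⟨⟨k, hkN⟩, by simp only [Fin.val_mk]; omega⟩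
      · omega
    · have hkN := lt_N_of_diagNeg l hk
      have hmem := YoungDiagram.mem_iff_lt_rowLen.mp ((diag_iff _ _).mp hk)
      have hrev : ((Fin.rev ⟨k, hkN⟩ : Fin N) : ℕ) = N - 1 - k := by
        simp only [Fin.val_rev]
        omega
      rw [rowLen_sigNeg l, dif_pos hkN] at hmem ⊢
      constructor
      · exact ⟨Fin.rev ⟨k, hkN⟩, by rw [hrev]; omega⟩
      · omega

lemma inner_int (hN : 1 ≤ N) (t : ℤ) (ht1 : -(N : ℤ) ≤ t) (ht2 : t ≤ -1) :
    (∀ i : Fin N, t ≠ l.1 i - ((i : ℕ) + 1)) ↔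
    ((∃ k, k < diagLen (sigPosYD l) ∧ t = (k : ℤ) - (sigPosYD l).colLen k) ∨
     (∃ k, k < diagLen (sigNegYD l) ∧ t = ((sigNegYD l).colLen k : ℤ) - k - N - 1)) := by
  constructor
  · intro hhole
    rcases frob_cover (sigPosYD l) t with ⟨i, hi⟩ | ⟨j, hj⟩
    · -- row case for sigPosYD
      by_cases hiN : i < N
      · rw [rowLen_sigPos l, dif_pos hiN] at hi
        by_cases hv : 0 ≤ l.1 ⟨i, hiN⟩
        · have hne := hhole ⟨i, hiN⟩
          simp only [Fin.val_mk] at hne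
          omega
        · -- l.1 ⟨i,hiN⟩ < 0, so rowLen = 0, t = -i-1
          push_neg at hv
          have hti : t = -(i : ℤ) - 1 := by omega
          -- now use cover for sigNegYD at -N-1-t
          rcases frob_cover (sigNegYD l) (-(N : ℤ) - 1 - t) with ⟨j, hj⟩ | ⟨j, hj⟩
          · by_cases hjN : j < N
            · have hrevlt : N - 1 - j < N := by omega
              rw [rowLen_sigNeg' l j hjN ⟨N - 1 - j, hrevlt⟩ (by simp)] at hj
              by_cases hu : l.1 ⟨N - 1 - j, hrevlt⟩ ≤ 0
              · have hne := hhole ⟨N - 1 - j, hrevlt⟩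
                simp only [Fin.val_mk] at hne
                omega
              · -- u > 0, rowLen = 0, -N-1-t = -j-1, so t = j - N; with t = -i-1, i = N-1-j
                push_neg at hu
                have hij : (N : ℤ) - 1 - j = i := by omega
                have hfin : (⟨i, hiN⟩ : Fin N) = ⟨N - 1 - j, hrevlt⟩ := by
                  ext
                  simp only [Fin.val_mk]
                  omega
                rw [hfin] at hv
                omega
            · rw [rowLen_sigNeg l, dif_neg hjN] at hj
              omega
          · right
            refine ⟨j, ?_, by omega⟩
            rw [diag_iff, YoungDiagram.mem_iff_lt_colLen]
            omega
      · rw [rowLen_sigPos l, dif_neg hiN] at hi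
        omega
    · left
      refine ⟨j, ?_, hj⟩
      rw [diag_iff, YoungDiagram.mem_iff_lt_colLen]
      omega
  · rintro (⟨k, hk, rfl⟩ | ⟨k, hk, rfl⟩) i hti
    · -- b+ case
      by_cases hv : 0 ≤ l.1 i
      · refine frob_disj (sigPosYD l) i k ?_
        rw [rowLen_sigPos' l i]
        omega
      · push_neg at hv
        -- i + 2 ≤ colLen k ≤ colLen 0, so (i,0) ∈ sigPosYD, rowLen i > 0, contra
        have hcol : (sigPosYD l).colLen k ≤ (sigPosYD l).colLen 0 :=
          (sigPosYD l).colLen_anti 0 k (Nat.zero_le k)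
        have hlt : (i : ℕ) < (sigPosYD l).colLen 0 := by omega
        have hmem : ((i : ℕ), 0) ∈ sigPosYD l := YoungDiagram.mem_iff_lt_colLen.mpr hlt
        have := YoungDiagram.mem_iff_lt_rowLen.mp hmem
        rw [rowLen_sigPos' l i] at this
        omega
    · -- b- case
      have hiN : (i : ℕ) < N := i.isLt
      by_cases hv : l.1 i ≤ 0
      · refine frob_disj (sigNegYD l) (N - 1 - i) k ?_
        rw [rowLen_sigNeg' l (N - 1 - i) (by omega) i (by omega)]
        omega
      · push_neg at hv
        have hcol : (sigNegYD l).colLen k ≤ (sigNegYD l).colLen 0 :=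
          (sigNegYD l).colLen_anti 0 k (Nat.zero_le k)
        have hlt : N - 1 - (i : ℕ) < (sigNegYD l).colLen 0 := by omega
        have hmem : (N - 1 - (i : ℕ), 0) ∈ sigNegYD l := YoungDiagram.mem_iff_lt_colLen.mpr hlt
        have := YoungDiagram.mem_iff_lt_rowLen.mp hmem
        rw [rowLen_sigNeg' l (N - 1 - i) (by omega) i (by omega)] at this
        omega

lemma outer_range {t : ℤ}
    (h : (∃ k, k < diagLen (sigPosYD l) ∧ t = ((sigPosYD l).rowLen k : ℤ) - k - 1) ∨
         (∃ k, k < diagLen (sigNegYD l) ∧ t = (k : ℤ) - N - (sigNegYD l).rowLen k)) :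
    0 ≤ t ∨ t ≤ -(N : ℤ) - 1 := by
  rcases h with ⟨k, hk, rfl⟩ | ⟨k, hk, rfl⟩
  · have := YoungDiagram.mem_iff_lt_rowLen.mp ((diag_iff _ _).mp hk)
    omega
  · have := YoungDiagram.mem_iff_lt_rowLen.mp ((diag_iff _ _).mp hk)
    omega

lemma inner_range {t : ℤ}
    (h : (∃ k, k < diagLen (sigPosYD l) ∧ t = (k : ℤ) - (sigPosYD l).colLen k) ∨
         (∃ k, k < diagLen (sigNegYD l) ∧ t = ((sigNegYD l).colLen k : ℤ) - k - N - 1)) :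
    -(N : ℤ) ≤ t ∧ t ≤ -1 := by
  rcases h with ⟨k, hk, rfl⟩ | ⟨k, hk, rfl⟩
  · have h1 := YoungDiagram.mem_iff_lt_colLen.mp ((diag_iff _ _).mp hk)
    have h2 := colLen_sigPos_le l k
    omega
  · have h1 := YoungDiagram.mem_iff_lt_colLen.mp ((diag_iff _ _).mp hk)
    have h2 := colLen_sigNeg_le l k
    omega

end Sig2

lemma eQ_inj {N : ℕ} {a b : ℤ} (h : (a : ℚ) + (N + 1) / 2 = (b : ℚ) + (N + 1) / 2) :
    a = b := by
  have h2 : (a : ℚ) = b := by linarith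
  exact_mod_cast h2

lemma mem_innerFin_iff {N : ℕ} (x : ℚ) :
    x ∈ innerFin N ↔ ∃ t : ℤ, (-(N : ℤ) ≤ t ∧ t ≤ -1) ∧ x = (t : ℚ) + (N + 1) / 2 := by
  simp only [innerFin, Finset.mem_image, Finset.mem_univ, true_and]
  constructor
  · rintro ⟨k, rfl⟩
    have hk := k.isLt
    refine ⟨(k : ℤ) - N, ⟨by omega, by omega⟩, ?_⟩
    push_cast
    ring
  · rintro ⟨t, ⟨h1, h2⟩, rfl⟩
    refine ⟨⟨(t + N).toNat, by omega⟩, ?_⟩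
    show (((t + N).toNat : ℕ) : ℚ) - ((N : ℚ) - 1) / 2 = (t : ℚ) + ((N : ℚ) + 1) / 2
    have hq : (((t + N).toNat : ℕ) : ℚ) = (t : ℚ) + N := by
      have h3 : ((t + N).toNat : ℤ) = t + N := by omega
      exact_mod_cast congrArg (Int.cast : ℤ → ℚ) h3
    rw [hq]
    ring

lemma mem_config_iff {N : ℕ} (l : Signature N) (x : ℚ) :
    x ∈ config N l ↔
      ∃ i : Fin N, x = ((l.1 i - ((i : ℕ) + 1) : ℤ) : ℚ) + (N + 1) / 2 := by
  simp only [config, Finset.mem_image, Finset.mem_univ, true_and]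
  constructor
  · rintro ⟨i, rfl⟩
    exact ⟨i, by push_cast; ring⟩
  · rintro ⟨i, rfl⟩
    exact ⟨i, by push_cast; ring⟩

lemma lhs_outer {N : ℕ} (l : Signature N) (x : ℚ) :
    x ∈ (↑(Xconf N l) : Set ℚ) ∩ outerSet N ↔
      ∃ t : ℤ, ((∃ i : Fin N, t = l.1 i - ((i : ℕ) + 1)) ∧ (0 ≤ t ∨ t ≤ -(N : ℤ) - 1)) ∧
        x = (t : ℚ) + (N + 1) / 2 := by
  constructor
  · rintro ⟨hX, hlat, hnin⟩
    simp only [Finset.mem_coe] at hnin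
    rw [Finset.mem_coe, Xconf, Finset.mem_union, Finset.mem_sdiff, Finset.mem_sdiff] at hX
    rcases hX with ⟨hc, -⟩ | ⟨hin, -⟩
    · rw [mem_config_iff] at hc
      obtain ⟨i, rfl⟩ := hc
      refine ⟨l.1 i - ((i : ℕ) + 1), ⟨⟨i, rfl⟩, ?_⟩, rfl⟩
      by_contra hr
      push_neg at hr
      exact hnin ((mem_innerFin_iff _).mpr ⟨_, ⟨by omega, by omega⟩, rfl⟩)
    · exact absurd hin hnin
  · rintro ⟨t, ⟨⟨i, rfl⟩, hr⟩, rfl⟩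
    have hnin : ((l.1 i - ((i : ℕ) + 1) : ℤ) : ℚ) + (N + 1) / 2 ∉ innerFin N := by
      intro hmem
      rw [mem_innerFin_iff] at hmem
      obtain ⟨s, ⟨hs1, hs2⟩, hs⟩ := hmem
      have := eQ_inj hs
      omega
    refine ⟨?_, ⟨l.1 i - ((i : ℕ) + 1), rfl⟩, by simpa only [Finset.mem_coe] using hnin⟩
    rw [Finset.mem_coe, Xconf, Finset.mem_union, Finset.mem_sdiff]
    exact Or.inl ⟨(mem_config_iff l _).mpr ⟨i, rfl⟩, hnin⟩

lemma lhs_inner {N : ℕ} (l : Signature N) (x : ℚ) :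
    x ∈ (↑(Xconf N l) : Set ℚ) ∩ (↑(innerFin N) : Set ℚ) ↔
      ∃ t : ℤ, ((-(N : ℤ) ≤ t ∧ t ≤ -1) ∧ (∀ i : Fin N, t ≠ l.1 i - ((i : ℕ) + 1))) ∧
        x = (t : ℚ) + (N + 1) / 2 := by
  constructor
  · rintro ⟨hX, hin⟩
    simp only [Finset.mem_coe] at hin
    rw [Finset.mem_coe, Xconf, Finset.mem_union, Finset.mem_sdiff, Finset.mem_sdiff] at hX
    rcases hX with ⟨-, hnin⟩ | ⟨-, hnc⟩
    · exact absurd hin hnin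
    · rw [mem_innerFin_iff] at hin
      obtain ⟨t, ⟨h1, h2⟩, rfl⟩ := hin
      refine ⟨t, ⟨⟨h1, h2⟩, ?_⟩, rfl⟩
      intro i hti
      exact hnc ((mem_config_iff l _).mpr ⟨i, by rw [hti]⟩)
  · rintro ⟨t, ⟨⟨h1, h2⟩, hhole⟩, rfl⟩
    have hin : ((t : ℚ) + (N + 1) / 2) ∈ innerFin N :=
      (mem_innerFin_iff _).mpr ⟨t, ⟨h1, h2⟩, rfl⟩
    have hnc : ((t : ℚ) + (N + 1) / 2) ∉ config N l := by
      intro hmem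
      rw [mem_config_iff] at hmem
      obtain ⟨i, hi⟩ := hmem
      exact hhole i (eQ_inj hi)
    refine ⟨?_, by simpa only [Finset.mem_coe] using hin⟩
    rw [Finset.mem_coe, Xconf, Finset.mem_union, Finset.mem_sdiff, Finset.mem_sdiff]
    exact Or.inr ⟨hin, hnc⟩

lemma rhs_outer {N : ℕ} (l : Signature N) (x : ℚ) :
    x ∈ ({x : ℚ | ∃ k < diagLen (sigPosYD l), x = aFrob (sigPosYD l) k + N / 2} ∪
         {x : ℚ | ∃ k < diagLen (sigNegYD l), x = -(aFrob (sigNegYD l) k) - N / 2}) ↔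
      ∃ t : ℤ, ((∃ k, k < diagLen (sigPosYD l) ∧ t = ((sigPosYD l).rowLen k : ℤ) - k - 1) ∨
                (∃ k, k < diagLen (sigNegYD l) ∧ t = (k : ℤ) - N - (sigNegYD l).rowLen k)) ∧
        x = (t : ℚ) + (N + 1) / 2 := by
  simp only [Set.mem_union, Set.mem_setOf_eq]
  constructor
  · rintro (⟨k, hk, rfl⟩ | ⟨k, hk, rfl⟩)
    · exact ⟨((sigPosYD l).rowLen k : ℤ) - k - 1, Or.inl ⟨k, hk, rfl⟩,
        by rw [aFrob]; push_cast; ring⟩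
    · exact ⟨(k : ℤ) - N - (sigNegYD l).rowLen k, Or.inr ⟨k, hk, rfl⟩,
        by rw [aFrob]; push_cast; ring⟩
  · rintro ⟨t, (⟨k, hk, rfl⟩ | ⟨k, hk, rfl⟩), rfl⟩
    · exact Or.inl ⟨k, hk, by rw [aFrob]; push_cast; ring⟩
    · exact Or.inr ⟨k, hk, by rw [aFrob]; push_cast; ring⟩

lemma rhs_inner {N : ℕ} (l : Signature N) (x : ℚ) :
    x ∈ ({x : ℚ | ∃ k < diagLen (sigPosYD l), x = N / 2 - bFrob (sigPosYD l) k} ∪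
         {x : ℚ | ∃ k < diagLen (sigNegYD l), x = -(N / 2 : ℚ) + bFrob (sigNegYD l) k}) ↔
      ∃ t : ℤ, ((∃ k, k < diagLen (sigPosYD l) ∧ t = (k : ℤ) - (sigPosYD l).colLen k) ∨
                (∃ k, k < diagLen (sigNegYD l) ∧ t = ((sigNegYD l).colLen k : ℤ) - k - N - 1)) ∧
        x = (t : ℚ) + (N + 1) / 2 := by
  simp only [Set.mem_union, Set.mem_setOf_eq]
  constructor
  · rintro (⟨k, hk, rfl⟩ | ⟨k, hk, rfl⟩)
    · exact ⟨(k : ℤ) - (sigPosYD l).colLen k, Or.inl ⟨k, hk, rfl⟩,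
        by rw [bFrob]; push_cast; ring⟩
    · exact ⟨((sigNegYD l).colLen k : ℤ) - k - N - 1, Or.inr ⟨k, hk, rfl⟩,
        by rw [bFrob]; push_cast; ring⟩
  · rintro ⟨t, (⟨k, hk, rfl⟩ | ⟨k, hk, rfl⟩), rfl⟩
    · exact Or.inl ⟨k, hk, by rw [bFrob]; push_cast; ring⟩
    · exact Or.inr ⟨k, hk, by rw [bFrob]; push_cast; ring⟩

/-- Lemma 7.1: for a signature `λ ∈ SGN(N)` with particles/holes configuration `X(λ)`,
`X(λ) ∩ 𝔛^{(N)}_out = {a⁺_i + N/2} ∪ {-a⁻_j - N/2}` and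
`X(λ) ∩ 𝔛^{(N)}_in = {N/2 - b⁺_i} ∪ {-N/2 + b⁻_j}`, where `a±_i, b±_i` are the modified
Frobenius coordinates of `λ±` (with `1 ≤ i ≤ d(λ±)`). -/
theorem particles_holes_frobenius (N : ℕ) (hN : 1 ≤ N) (l : Signature N) :
    (↑(Xconf N l) ∩ outerSet N =
      ({x : ℚ | ∃ k < diagLen (sigPosYD l), x = aFrob (sigPosYD l) k + N / 2} ∪
       {x : ℚ | ∃ k < diagLen (sigNegYD l), x = -(aFrob (sigNegYD l) k) - N / 2})) ∧
    (↑(Xconf N l) ∩ ↑(innerFin N) =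
      ({x : ℚ | ∃ k < diagLen (sigPosYD l), x = N / 2 - bFrob (sigPosYD l) k} ∪
       {x : ℚ | ∃ k < diagLen (sigNegYD l), x = -(N / 2) + bFrob (sigNegYD l) k})) := by

  constructor
  · apply Set.ext
    intro x
    rw [lhs_outer l x, rhs_outer l x]
    exact exists_congr fun t => and_congr_left' (outer_int l t)
  · apply Set.ext
    intro x
    rw [lhs_inner l x, rhs_inner l x]
    refine exists_congr fun t => and_congr_left' ?_
    constructor
    · rintro ⟨⟨h1, h2⟩, hhole⟩
      exact (inner_int l hN t h1 h2).mp hhole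
    · intro hR
      obtain ⟨h1, h2⟩ := inner_range l hR
      exact ⟨⟨h1, h2⟩, (inner_int l hN t h1 h2).mpr hR⟩
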